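/- Let d ≥ 1 and let μ : [0,∞) → ℝ be continuously differentiable with γ₁ ≤ μ(t) + 2·t·μ'(t) ≤ γ₂ for all t ≥ 0, where 0 < γ₁ ≤ γ₂. Define A : ℝ^d → ℝ^d by A(a) := μ(|a|²)·a. Then for all a, b ∈ ℝ^d: γ₁·|a − b|² ≤ ⟨A(a) − A(b), a − b⟩ and |A(a) − A(b)| ≤ γ₂·|a − b|; i.e., A is strongly monotone with constant γ₁ and Lipschitz continuous with constant γ₂. -/

import Mathlib

open RealInnerProductSpace

set_option maxHeartbeats 1000000

/-- Strong monotonicity and Lipschitz continuity of the vector field `A(a) = μ(|a|²) a`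
under the structural assumption `γ₁ ≤ μ(t) + 2 t μ'(t) ≤ γ₂` on `[0, ∞)` for a continuously
differentiable scalar nonlinearity `μ`. -/
theorem stmt_18 (d : ℕ) (hd : 1 ≤ d) (μ μ' : ℝ → ℝ) (γ₁ γ₂ : ℝ)
    (hγ₁ : 0 < γ₁) (hγ₁₂ : γ₁ ≤ γ₂)
    (hdiff : ∀ t ∈ Set.Ici (0 : ℝ), HasDerivWithinAt μ (μ' t) (Set.Ici (0 : ℝ)) t)
    (hcont : ContinuousOn μ' (Set.Ici (0 : ℝ)))
    (hbound : ∀ t ∈ Set.Ici (0 : ℝ),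
      γ₁ ≤ μ t + 2 * t * μ' t ∧ μ t + 2 * t * μ' t ≤ γ₂)
    (A : EuclideanSpace ℝ (Fin d) → EuclideanSpace ℝ (Fin d))
    (hA : ∀ a : EuclideanSpace ℝ (Fin d), A a = μ (‖a‖ ^ 2) • a) :
    ∀ a b : EuclideanSpace ℝ (Fin d),
      γ₁ * ‖a - b‖ ^ 2 ≤ ⟪A a - A b, a - b⟫ ∧ ‖A a - A b‖ ≤ γ₂ * ‖a - b‖ := by
  set c : ℝ := (γ₁ + γ₂) / 2 with hc
  set L : ℝ := (γ₂ - γ₁) / 2 with hLdef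
  have hL0 : 0 ≤ L := by rw [hLdef]; linarith
  have hc0 : 0 < c := by rw [hc]; linarith
  -- Step 1: γ₁ ≤ μ t ≤ γ₂ on [0, ∞), in the form |μ t - c| ≤ L
  have mubd : ∀ t ∈ Set.Ici (0 : ℝ), |μ t - c| ≤ L := by
    intro t ht
    rcases eq_or_lt_of_le (Set.mem_Ici.mp ht) with h0 | h0
    · obtain ⟨h1, h2⟩ := hbound 0 Set.self_mem_Ici
      rw [← h0]
      simp only [mul_zero, zero_mul, add_zero] at h1 h2
      rw [abs_le]; constructor <;> [skip; skip] <;> (rw [hLdef, hc]; linarith)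
    · set s := Real.sqrt t with hs
      have hs0 : 0 < s := Real.sqrt_pos.2 h0
      have hst : s ^ 2 = t := Real.sq_sqrt ht
      have hgd : ∀ r ∈ Set.Ici (0 : ℝ),
          HasDerivWithinAt (fun y : ℝ => y * μ (y ^ 2) - c * y)
            ((fun r : ℝ => μ (r ^ 2) + 2 * r ^ 2 * μ' (r ^ 2) - c) r) (Set.Ici 0) r := by
        intro r hr
        have hsq : HasDerivWithinAt (fun y : ℝ => y ^ 2) (2 * r) (Set.Ici 0) r := by
          simpa using (hasDerivAt_pow 2 r).hasDerivWithinAt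
        have hmaps : Set.MapsTo (fun y : ℝ => y ^ 2) (Set.Ici 0) (Set.Ici 0) :=
          fun y _ => sq_nonneg y
        have hcomp : HasDerivWithinAt (fun y : ℝ => μ (y ^ 2)) (μ' (r ^ 2) * (2 * r))
            (Set.Ici 0) r := by
          have := HasDerivWithinAt.comp (h₂ := μ) (h := fun y : ℝ => y ^ 2)
            (h₂' := μ' (r ^ 2)) (h' := 2 * r) (s := Set.Ici 0) (s' := Set.Ici 0) (x := r)
            (hdiff (r ^ 2) (sq_nonneg r)) hsq hmaps
          exact this
        have h1 : HasDerivWithinAt (fun y : ℝ => y * μ (y ^ 2))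
            (1 * μ (r ^ 2) + r * (μ' (r ^ 2) * (2 * r))) (Set.Ici 0) r :=
          (hasDerivWithinAt_id r _).mul hcomp
        have h2 : HasDerivWithinAt (fun y : ℝ => c * y) c (Set.Ici 0) r := by
          simpa using (hasDerivWithinAt_id r (Set.Ici 0)).const_mul c
        have h3 := h1.sub h2
        exact h3.congr_deriv (by beta_reduce; ring)
      have hbd : ∀ r ∈ Set.Ici (0 : ℝ),
          ‖(fun r : ℝ => μ (r ^ 2) + 2 * r ^ 2 * μ' (r ^ 2) - c) r‖ ≤ L := by
        intro r _
        obtain ⟨h1, h2⟩ := hbound (r ^ 2) (sq_nonneg r)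
        rw [Real.norm_eq_abs, abs_le]
        constructor <;> (rw [hLdef, hc]; linarith)
      have key := (convex_Ici (0 : ℝ)).norm_image_sub_le_of_norm_hasDerivWithin_le
        hgd hbd (Set.self_mem_Ici) (le_of_lt hs0)
      simp only [mul_zero, zero_mul, sub_zero, zero_pow, sub_self] at key
      rw [Real.norm_eq_abs, Real.norm_eq_abs, hst] at key
      have : |s * (μ t - c)| ≤ L * |s| := by
        have : s * μ t - c * s = s * (μ t - c) := by ring
        rw [← this]; exact key
      rw [abs_mul, abs_of_pos hs0] at this
      have := le_of_mul_le_mul_left (by linarith [this] : s * |μ t - c| ≤ s * L) hs0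
      linarith
  -- Step 2: the shifted field F x = μ(‖x‖²) • x - c • x is L-Lipschitz
  set F : EuclideanSpace ℝ (Fin d) → EuclideanSpace ℝ (Fin d) := fun x => μ (‖x‖ ^ 2) • x - c • x with hF
  set D : EuclideanSpace ℝ (Fin d) → EuclideanSpace ℝ (Fin d) →L[ℝ] EuclideanSpace ℝ (Fin d) := fun x =>
      (μ (‖x‖ ^ 2) • ContinuousLinearMap.id ℝ (EuclideanSpace ℝ (Fin d))
        + (μ' (‖x‖ ^ 2) • ((2 : ℝ) • (innerSL ℝ x))).smulRight x)
      - c • ContinuousLinearMap.id ℝ (EuclideanSpace ℝ (Fin d)) with hD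
  have hFd : ∀ x : EuclideanSpace ℝ (Fin d), HasFDerivWithinAt F (D x) Set.univ x := by
    intro x
    have hsq : HasFDerivAt (fun y : EuclideanSpace ℝ (Fin d) => ‖y‖ ^ 2) ((2 : ℝ) • (innerSL ℝ x)) x := by
      have h1 := (hasFDerivAt_id (𝕜 := ℝ) x).inner ℝ (hasFDerivAt_id x)
      simp only [id_eq, real_inner_self_eq_norm_sq] at h1
      refine h1.congr_fderiv ?_
      ext h
      simp [fderivInnerCLM_apply, real_inner_comm, two_mul]
    have hμx : HasFDerivWithinAt (fun y : EuclideanSpace ℝ (Fin d) => μ (‖y‖ ^ 2))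
        (μ' (‖x‖ ^ 2) • ((2 : ℝ) • (innerSL ℝ x))) Set.univ x :=
      HasDerivWithinAt.comp_hasFDerivWithinAt x (hdiff (‖x‖ ^ 2) (Set.mem_Ici.mpr (sq_nonneg _)))
        hsq.hasFDerivWithinAt (fun y _ => sq_nonneg ‖y‖)
    have hmul : HasFDerivWithinAt (fun y : EuclideanSpace ℝ (Fin d) => μ (‖y‖ ^ 2) • y)
        (μ (‖x‖ ^ 2) • ContinuousLinearMap.id ℝ (EuclideanSpace ℝ (Fin d))
          + (μ' (‖x‖ ^ 2) • ((2 : ℝ) • (innerSL ℝ x))).smulRight x) Set.univ x := by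
      have := hμx.smul (hasFDerivWithinAt_id x Set.univ)
      simp at this ⊢
      exact this
    have hsmul : HasFDerivWithinAt (fun y : EuclideanSpace ℝ (Fin d) => c • y) (c • ContinuousLinearMap.id ℝ (EuclideanSpace ℝ (Fin d)))
        Set.univ x := ((hasFDerivAt_id x).const_smul c).hasFDerivWithinAt
    exact hmul.sub hsmul
  have hDapp : ∀ x h : EuclideanSpace ℝ (Fin d), D x h = (μ (‖x‖ ^ 2) - c) • h
      + (2 * μ' (‖x‖ ^ 2) * ⟪x, h⟫) • x := by
    intro x h
    rw [hD]
    simp [ContinuousLinearMap.smul_apply, ContinuousLinearMap.smulRight_apply, sub_smul,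
      smul_smul]
    module
  have hDn : ∀ x : EuclideanSpace ℝ (Fin d), ‖D x‖ ≤ L := by
    intro x
    apply ContinuousLinearMap.opNorm_le_bound _ hL0
    intro h
    rw [hDapp x h]
    set t : ℝ := ‖x‖ ^ 2 with ht
    set P : ℝ := μ t - c with hP
    set m : ℝ := μ' t with hm
    set q : ℝ := ⟪x, h⟫ with hq
    have hPb : |P| ≤ L := mubd t (Set.mem_Ici.mpr (sq_nonneg _))
    have hQb : |P + 2 * t * m| ≤ L := by
      obtain ⟨h1, h2⟩ := hbound t (Set.mem_Ici.mpr (sq_nonneg _))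
      rw [abs_le, hP, hm, hLdef, hc]
      constructor <;> linarith
    have hcs : q ^ 2 ≤ t * ‖h‖ ^ 2 := by
      have := abs_real_inner_le_norm x h
      nlinarith [abs_nonneg (⟪x, h⟫), sq_abs (⟪x, h⟫), norm_nonneg x, norm_nonneg h]
    have hnv : ‖P • h + (2 * m * q) • x‖ ^ 2
        = P ^ 2 * ‖h‖ ^ 2 + 2 * (P * (2 * m * q)) * q + (2 * m * q) ^ 2 * t := by
      rw [norm_add_sq_real, real_inner_smul_left, real_inner_smul_right, norm_smul, norm_smul]
      rw [ht, hq, real_inner_comm h x]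
      simp [mul_pow, sq_abs]
      ring
    have hsq2 : ‖P • h + (2 * m * q) • x‖ ^ 2 ≤ (L * ‖h‖) ^ 2 := by
      rw [hnv]
      have habsP : P ^ 2 ≤ L ^ 2 := by nlinarith [sq_abs P, abs_nonneg P]
      have habsQ : (P + 2 * t * m) ^ 2 ≤ L ^ 2 := by
        nlinarith [sq_abs (P + 2 * t * m), abs_nonneg (P + 2 * t * m)]
      rcases le_or_gt 0 (4 * m * (P + t * m)) with hk | hk
      · nlinarith [sq_nonneg q, sq_nonneg ‖h‖, sq_nonneg ‖x‖]
      · nlinarith [sq_nonneg q, sq_nonneg ‖h‖]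
    nlinarith [norm_nonneg (P • h + (2 * m * q) • x), mul_nonneg hL0 (norm_nonneg h)]
  have hFlip : ∀ a b : EuclideanSpace ℝ (Fin d), ‖F a - F b‖ ≤ L * ‖a - b‖ := by
    intro a b
    exact convex_univ.norm_image_sub_le_of_norm_hasFDerivWithin_le
      (fun x _ => hFd x) (fun x _ => hDn x) (Set.mem_univ b) (Set.mem_univ a)
  -- Step 3: conclude
  intro a b
  have hab : A a - A b = (F a - F b) + c • (a - b) := by
    rw [hA a, hA b, hF]
    module
  constructor
  · have h1 : ⟪A a - A b, a - b⟫ = ⟪F a - F b, a - b⟫ + c * ‖a - b‖ ^ 2 := by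
      rw [hab, inner_add_left, real_inner_smul_left, real_inner_self_eq_norm_sq]
    have h2 := abs_real_inner_le_norm (F a - F b) (a - b)
    have h3 := hFlip a b
    have h4 : -(L * ‖a - b‖) * ‖a - b‖ ≤ ⟪F a - F b, a - b⟫ := by
      have := neg_abs_le (⟪F a - F b, a - b⟫)
      nlinarith [norm_nonneg (a - b), norm_nonneg (F a - F b)]
    rw [h1]
    have : γ₁ = c - L := by rw [hc, hLdef]; ring
    nlinarith [norm_nonneg (a - b)]
  · have h1 : ‖A a - A b‖ ≤ ‖F a - F b‖ + ‖c • (a - b)‖ := by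
      rw [hab]; exact norm_add_le _ _
    rw [norm_smul, Real.norm_eq_abs, abs_of_pos hc0] at h1
    have : γ₂ = L + c := by rw [hc, hLdef]; ring
    nlinarith [hFlip a b, norm_nonneg (a - b)]
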